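/- Let m₁ < m₂ be positive integers dividing n/k, and let w_m = (1^m 2^m ⋯ k^m)^{n/(mk)} over alphabet [k]. Then LCS(w_{m₁}, w_{m₂}) ≤ (1/k + m₁/m₂)·n. -/

import Mathlib

/-- The word `(1^m 2^m ⋯ k^m)^{n/(mk)}` over the alphabet `{0,…,k-1}`. -/
def wWord (k n m : ℕ) : List ℕ :=
  (List.replicate (n / (m * k))
    ((List.range k).flatMap fun l => List.replicate m l)).flatten

lemma bind_eq_map (m k : ℕ) (hm : 0 < m) :
    ((List.range k).flatMap fun l => List.replicate m l)
      = (List.range (m * k)).map (fun j => j / m) := by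
  induction k with
  | zero => simp
  | succ k ih =>
    rw [List.range_succ, List.flatMap_append, ih, Nat.mul_succ, List.range_add,
      List.map_append]
    congr 1
    simp only [List.flatMap_cons, List.flatMap_nil, List.append_nil]
    rw [List.map_map]
    symm
    have hmem : ∀ b ∈ List.map ((fun j => j / m) ∘ fun x => m * k + x) (List.range m), b = k := by
      intro b hb
      simp only [List.mem_map, List.mem_range, Function.comp] at hb
      obtain ⟨j, hj, rfl⟩ := hb
      rw [Nat.mul_add_div hm, Nat.div_eq_of_lt hj, add_zero]
    have h2 := List.eq_replicate_of_mem hmem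
    rw [List.length_map, List.length_range] at h2
    exact h2

lemma join_replicate (m k N : ℕ) (hm : 0 < m) :
    (List.replicate N ((List.range k).flatMap fun l => List.replicate m l)).flatten
      = (List.range (N * (m * k))).map (fun j => j / m % k) := by
  induction N with
  | zero => simp
  | succ N ih =>
    rw [List.replicate_succ', List.flatten_append, ih, Nat.succ_mul, List.range_add,
      List.map_append]
    congr 1
    simp only [List.flatten_cons, List.flatten_nil, List.append_nil]
    rw [bind_eq_map m k hm, List.map_map]
    apply List.map_congr_left
    intro j hj
    simp only [List.mem_range] at hj
    simp only [Function.comp]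
    rw [show N * (m * k) + j = m * (k * N) + j by ring, Nat.mul_add_div hm,
      Nat.mul_add_mod, Nat.mod_eq_of_lt (Nat.div_lt_of_lt_mul (by omega))]

lemma wWord_eq (k n m : ℕ) (hm : 0 < m) (h : m * k ∣ n) :
    wWord k n m = (List.range n).map (fun j => j / m % k) := by
  show (List.replicate (n / (m * k))
    ((List.range k).flatMap fun l => List.replicate m l)).flatten = _
  rw [join_replicate m k _ hm, Nat.div_mul_cancel h]

lemma decomp (m k x : ℕ) (hm : 0 < m) (hk : 0 < k) :
    x = m * k * (x / (m * k)) + m * (x / m % k) + x % m := by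
  have e1 : m * k * (x / (m * k)) + x % (m * k) = x := Nat.div_add_mod x (m * k)
  have e2 : m * (x % (m * k) / m) + x % (m * k) % m = x % (m * k) := Nat.div_add_mod _ m
  have e3 : x % (m * k) % m = x % m := Nat.mod_mod_of_dvd x ⟨k, rfl⟩
  have e4 : x % (m * k) / m = x / m % k := Nat.mod_mul_right_div_self x m k
  rw [e3, e4] at e2
  linarith

lemma aux_ineq (k m : ℕ) (hk : 0 < k) (hm : 0 < m) :
    (k - 1) * (m - 1) + k ≤ m * k + 1 := by
  obtain ⟨K, rfl⟩ := Nat.exists_eq_succ_of_ne_zero hk.ne'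
  obtain ⟨M, rfl⟩ := Nat.exists_eq_succ_of_ne_zero hm.ne'
  simp only [Nat.succ_sub_one]
  nlinarith

lemma step_lemma (k m x y : ℕ) (hm : 0 < m) (hk : 0 < k) (hxy : x < y)
    (hl : x / m % k = y / m % k) :
    x + (k - 1) * (x % m) + k ≤ y + (k - 1) * (y % m) := by
  have hx := decomp m k x hm hk
  have hy := decomp m k y hm hk
  rw [← hl] at hy
  set cx := x / (m * k) with hcx
  set cy := y / (m * k) with hcy
  set l := x / m % k with hldef
  set sx := x % m with hsx
  set sy := y % m with hsy
  have hsxm : sx < m := Nat.mod_lt _ hm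
  have hsym : sy < m := Nat.mod_lt _ hm
  have hmk : m ≤ m * k := Nat.le_mul_of_pos_right m hk
  -- cx ≤ cy
  have hc : cx ≤ cy := by
    by_contra h
    push_neg at h
    have h1 : cy + 1 ≤ cx := h
    have h2 : m * k * (cy + 1) ≤ m * k * cx := Nat.mul_le_mul_left _ h1
    have : y < x := by nlinarith
    omega
  -- t-monotonicity : cx * m + sx + 1 ≤ cy * m + sy
  have ht : cx * m + sx + 1 ≤ cy * m + sy := by
    rcases eq_or_lt_of_le hc with h | h
    · have hss : sx < sy := by
        rw [h] at hx
        by_contra hcon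
        push_neg at hcon
        have : y ≤ x := by linarith
        omega
      have : cx * m = cy * m := by rw [h]
      linarith
    · have h1 : cx + 1 ≤ cy := h
      have h2 : (cx + 1) * m ≤ cy * m := Nat.mul_le_mul_right _ h1
      nlinarith
  obtain ⟨K, rfl⟩ := Nat.exists_eq_succ_of_ne_zero hk.ne'
  simp only [Nat.succ_sub_one]
  have hmul : (K + 1) * (cx * m + sx + 1) ≤ (K + 1) * (cy * m + sy) :=
    Nat.mul_le_mul_left _ ht
  nlinarith

lemma core (k m₁ m₂ n L : ℕ) (hk : 0 < k) (hm₁ : 0 < m₁) (hm₂ : 0 < m₂) (hL : 0 < L)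
    (a b : ℕ → ℕ)
    (ha : ∀ i, i + 1 < L → a i < a (i + 1))
    (hb : ∀ i, i + 1 < L → b i < b (i + 1))
    (han : ∀ i, i < L → a i < n)
    (hbn : ∀ i, i < L → b i < n)
    (hlet : ∀ i, i < L → a i / m₁ % k = b i / m₂ % k) :
    k * L ≤ (n - 1) + (k - 1) * (m₁ - 1) + m₁ * k * ((n - 1) / m₂) + k := by
  have key : ∀ i, i < L →
      k * (i + 1) ≤ (a i + (k - 1) * (a i % m₁)) + m₁ * k * (b i / m₂) + k := by
    intro i
    induction i with
    | zero =>
      intro _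
      have h0 : k * 1 = k := mul_one k
      linarith [Nat.zero_le ((a 0 + (k - 1) * (a 0 % m₁)) + m₁ * k * (b 0 / m₂))]
    | succ i ih =>
      intro hi1
      have hi : i < L := Nat.lt_of_succ_lt hi1
      have IH := ih hi
      have hab := ha i hi1
      have hbb := hb i hi1
      have hrle : b i / m₂ ≤ b (i + 1) / m₂ := Nat.div_le_div_right hbb.le
      have hexp : k * (i + 1 + 1) = k * (i + 1) + k := by ring
      rcases eq_or_lt_of_le hrle with he | hlt
      · have hll : a i / m₁ % k = a (i + 1) / m₁ % k := by
          rw [hlet i hi, hlet (i + 1) hi1, he]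
        have hstep := step_lemma k m₁ (a i) (a (i + 1)) hm₁ hk hab hll
        rw [← he]
        linarith
      · have h1 : b i / m₂ + 1 ≤ b (i + 1) / m₂ := hlt
        have h2 : (k - 1) * (a i % m₁) ≤ (k - 1) * (m₁ - 1) :=
          Nat.mul_le_mul_left _ (by
            have := Nat.mod_lt (a i) hm₁; omega)
        have h3 : (k - 1) * (m₁ - 1) + k ≤ m₁ * k + 1 := aux_ineq k m₁ hk hm₁
        have h5 : m₁ * k * (b i / m₂ + 1) ≤ m₁ * k * (b (i + 1) / m₂) :=
          Nat.mul_le_mul_left _ h1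
        have h6 : m₁ * k * (b i / m₂ + 1) = m₁ * k * (b i / m₂) + m₁ * k := by ring
        linarith [Nat.zero_le ((k - 1) * (a (i + 1) % m₁))]
  have hL1 : L - 1 < L := Nat.sub_lt hL one_pos
  have K := key (L - 1) hL1
  have hA : a (L - 1) ≤ n - 1 := by have := han _ hL1; omega
  have hW : (k - 1) * (a (L - 1) % m₁) ≤ (k - 1) * (m₁ - 1) :=
    Nat.mul_le_mul_left _ (by have := Nat.mod_lt (a (L - 1)) hm₁; omega)
  have hr : m₁ * k * (b (L - 1) / m₂) ≤ m₁ * k * ((n - 1) / m₂) :=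
    Nat.mul_le_mul_left _ (Nat.div_le_div_right (by have := hbn _ hL1; omega))
  have hLe : L - 1 + 1 = L := Nat.succ_pred_eq_of_pos hL
  rw [hLe] at K
  linarith

theorem stmt18 (k n m₁ m₂ : ℕ) (hk : 0 < k) (hkn : k ∣ n)
    (hm₁ : 0 < m₁) (hm₁₂ : m₁ < m₂) (hd₁ : m₁ ∣ n / k) (hd₂ : m₂ ∣ n / k) :
    ∀ c : List ℕ, c.Sublist (wWord k n m₁) → c.Sublist (wWord k n m₂) →
      (c.length : ℝ) ≤ (1 / (k : ℝ) + (m₁ : ℝ) / m₂) * n := by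
  intro c hc1 hc2
  have hm₂ : 0 < m₂ := hm₁.trans hm₁₂
  have hdk1 : m₁ * k ∣ n := by
    have h := mul_dvd_mul hd₁ (dvd_refl k)
    rwa [Nat.div_mul_cancel hkn] at h
  have hdk2 : m₂ * k ∣ n := by
    have h := mul_dvd_mul hd₂ (dvd_refl k)
    rwa [Nat.div_mul_cancel hkn] at h
  have hdn2 : m₂ ∣ n := dvd_trans (dvd_mul_right m₂ k) hdk2
  have hw1 : wWord k n m₁ = (List.range n).map (fun j => j / m₁ % k) :=
    wWord_eq k n m₁ hm₁ hdk1
  have hw2 : wWord k n m₂ = (List.range n).map (fun j => j / m₂ % k) :=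
    wWord_eq k n m₂ hm₂ hdk2
  have hlen1 : (wWord k n m₁).length = n := by rw [hw1]; simp
  have hlen2 : (wWord k n m₂).length = n := by rw [hw2]; simp
  have hmR : (0:ℝ) ≤ (1 / (k : ℝ) + (m₁ : ℝ) / m₂) * n := by positivity
  rcases Nat.eq_zero_or_pos c.length with hL0 | hL
  · rw [hL0]; exact_mod_cast hmR
  obtain ⟨f, hf⟩ := List.sublist_iff_exists_fin_orderEmbedding_get_eq.1 hc1
  obtain ⟨g, hg⟩ := List.sublist_iff_exists_fin_orderEmbedding_get_eq.1 hc2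
  have hget1 : ∀ j : Fin (wWord k n m₁).length, (wWord k n m₁).get j = (j : ℕ) / m₁ % k := by
    intro j
    have hj : (j : ℕ) < n := by have := j.isLt; omega
    rw [List.get_eq_getElem]
    simp only [hw1, List.getElem_map, List.getElem_range]
  have hget2 : ∀ j : Fin (wWord k n m₂).length, (wWord k n m₂).get j = (j : ℕ) / m₂ % k := by
    intro j
    have hj : (j : ℕ) < n := by have := j.isLt; omega
    rw [List.get_eq_getElem]
    simp only [hw2, List.getElem_map, List.getElem_range]
  set a : ℕ → ℕ := fun i => if h : i < c.length then ((f ⟨i, h⟩ : Fin _) : ℕ) else 0 with hadef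
  set b : ℕ → ℕ := fun i => if h : i < c.length then ((g ⟨i, h⟩ : Fin _) : ℕ) else 0 with hbdef
  have haval : ∀ i (h : i < c.length), a i = ((f ⟨i, h⟩ : Fin _) : ℕ) := by
    intro i h; simp [hadef, h]
  have hbval : ∀ i (h : i < c.length), b i = ((g ⟨i, h⟩ : Fin _) : ℕ) := by
    intro i h; simp [hbdef, h]
  have ha : ∀ i, i + 1 < c.length → a i < a (i + 1) := by
    intro i h
    have h' : i < c.length := Nat.lt_of_succ_lt h
    rw [haval i h', haval (i + 1) h]
    exact f.strictMono (by simp [Fin.mk_lt_mk])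
  have hb : ∀ i, i + 1 < c.length → b i < b (i + 1) := by
    intro i h
    have h' : i < c.length := Nat.lt_of_succ_lt h
    rw [hbval i h', hbval (i + 1) h]
    exact g.strictMono (by simp [Fin.mk_lt_mk])
  have han : ∀ i, i < c.length → a i < n := by
    intro i h; rw [haval i h]; have := (f ⟨i, h⟩).isLt; omega
  have hbn : ∀ i, i < c.length → b i < n := by
    intro i h; rw [hbval i h]; have := (g ⟨i, h⟩).isLt; omega
  have hlet : ∀ i, i < c.length → a i / m₁ % k = b i / m₂ % k := by
    intro i h
    rw [haval i h, hbval i h, ← hget1 (f ⟨i, h⟩), ← hget2 (g ⟨i, h⟩), ← hf ⟨i, h⟩, ← hg ⟨i, h⟩]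
  have B := core k m₁ m₂ n c.length hk hm₁ hm₂ hL a b ha hb han hbn hlet
  have hn0 : 0 < n := Nat.pos_of_ne_zero (by rintro rfl; exact Nat.not_lt_zero _ (han 0 hL))
  obtain ⟨q, hq⟩ := hdn2
  have hq1 : 1 ≤ q := by
    rcases Nat.eq_zero_or_pos q with h | h
    · rw [h, mul_zero] at hq; omega
    · exact h
  obtain ⟨q', rfl⟩ : ∃ q'', q = q'' + 1 := ⟨q - 1, by omega⟩
  have hn' : n = m₂ * q' + m₂ := by rw [hq]; ring
  have h7 : (n - 1) / m₂ = q' := by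
    rw [hn', Nat.add_sub_assoc hm₂, Nat.mul_add_div hm₂,
      Nat.div_eq_of_lt (by omega), add_zero]
  rw [h7] at B
  have h3 : (k - 1) * (m₁ - 1) + k ≤ m₁ * k + 1 := aux_ineq k m₁ hk hm₁
  have h10 : m₁ * k * (q' + 1) = m₁ * k * q' + m₁ * k := by ring
  have hn1 : n - 1 + 1 = n := by omega
  have B2 : k * c.length ≤ n + m₁ * k * (q' + 1) := by linarith
  have hkR : (0:ℝ) < k := by exact_mod_cast hk
  have hm2R : (0:ℝ) < m₂ := by exact_mod_cast hm₂
  have hqR : ((q' + 1 : ℕ) : ℝ) = (n : ℝ) / m₂ := by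
    rw [eq_div_iff hm2R.ne']
    have : ((q' + 1) * m₂ : ℕ) = n := by rw [mul_comm]; omega
    exact_mod_cast this
  calc (c.length : ℝ) ≤ (n + m₁ * k * (q' + 1)) / k := by
        rw [le_div_iff₀ hkR, mul_comm]
        exact_mod_cast B2
    _ = (n : ℝ) / k + m₁ * ((q' + 1 : ℕ) : ℝ) := by field_simp; push_cast; ring
    _ = (1 / (k : ℝ) + (m₁ : ℝ) / m₂) * n := by rw [hqR]; field_simp
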